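/- For every even integer k with 4 ≤ k ≤ n and every edge e of K_n, the generalized k-edge-connectivity of K_n minus e is strictly less than n − k/2. -/

import Mathlib

open SimpleGraph

variable {V : Type*}

/-- An `S`-Steiner tree in `G`: a subgraph of `G` that is a tree and contains all of `S`. -/
def IsSteinerTree (G : SimpleGraph V) (S : Set V) (T : G.Subgraph) : Prop :=
  S ⊆ T.verts ∧ T.coe.IsTree

/-- The maximum number of pairwise edge-disjoint `S`-Steiner trees in `G`. -/
noncomputable def steinerEdgeConn (G : SimpleGraph V) (S : Set V) : ℕ :=
  sSup {n : ℕ | ∃ f : Fin n → G.Subgraph, (∀ i, IsSteinerTree G S (f i)) ∧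
    ∀ i j, i ≠ j → Disjoint (f i).edgeSet (f j).edgeSet}

/-- The maximum number of pairwise internally disjoint `S`-Steiner trees in `G`. -/
noncomputable def steinerConn (G : SimpleGraph V) (S : Set V) : ℕ :=
  sSup {n : ℕ | ∃ f : Fin n → G.Subgraph, (∀ i, IsSteinerTree G S (f i)) ∧
    ∀ i j, i ≠ j → Disjoint (f i).edgeSet (f j).edgeSet ∧
      (f i).verts ∩ (f j).verts = S}

/-- The generalized `k`-edge-connectivity `λ_k(G)`. -/
noncomputable def genEdgeConn (G : SimpleGraph V) (k : ℕ) : ℕ :=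
  sInf {m : ℕ | ∃ S : Set V, S.ncard = k ∧ steinerEdgeConn G S = m}

/-- The generalized `k`-connectivity `κ_k(G)`. -/
noncomputable def genConn (G : SimpleGraph V) (k : ℕ) : ℕ :=
  sInf {m : ℕ | ∃ S : Set V, S.ncard = k ∧ steinerConn G S = m}

/-- The edge-connectivity `λ(G)`: the least size of a set of edges whose removal
disconnects the graph. -/
noncomputable def edgeConn (G : SimpleGraph V) : ℕ :=
  sInf {m : ℕ | ∃ M : Set (Sym2 V), M ⊆ G.edgeSet ∧ M.ncard = m ∧
    ¬ (G.deleteEdges M).Connected}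

/-- The vertex-connectivity `κ(G)`: the least size of a set of vertices whose removal
leaves a non-connected graph. -/
noncomputable def vertConn (G : SimpleGraph V) : ℕ :=
  sInf {m : ℕ | ∃ A : Set V, A.ncard = m ∧ ¬ (G.induce (Aᶜ : Set V)).Connected}


/-- The minimum degree `δ(G)` (as the least cardinality of a neighbor set). -/
noncomputable def minDeg (G : SimpleGraph V) : ℕ :=
  sInf {d : ℕ | ∃ v : V, (G.neighborSet v).ncard = d}

open SimpleGraph

section Aux
variable {X : Type*}

lemma tree_firstEdge_inj {H : SimpleGraph X} (hH : H.IsTree) (r : X) :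
    ∃ g : X → Sym2 X, (∀ s, s ≠ r → g s ∈ H.edgeSet ∧ s ∈ g s) ∧
      ∀ a b, a ≠ r → b ≠ r → g a = g b → a = b := by
  classical
  choose f hf hf' using (hH.existsUnique_path · r)
  refine ⟨fun s => s(s, (f s).getVert 1), fun s hs => ?_, fun a b ha hb hab => ?_⟩
  · have h0 : s(s, (f s).getVert 1) = ((f s).firstDart (Walk.not_nil_of_ne hs)).edge :=
      (Walk.edge_firstDart _ _).symm
    exact ⟨by rw [show ((fun s => s(s, (f s).getVert 1)) s) = s(s, (f s).getVert 1) from rfl, h0]; exact Dart.edge_mem _, Sym2.mem_mk_left _ _⟩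
  · have h : ((f a).firstDart (Walk.not_nil_of_ne ha)).edge
        = ((f b).firstDart (Walk.not_nil_of_ne hb)).edge := hab
    clear hab
    wlog h' : (f a).length ≤ (f b).length generalizing a b
    · exact Eq.symm (this b a hb ha h.symm (le_of_not_ge h'))
    rw [dart_edge_eq_iff] at h
    obtain (h | h) := h
    · exact (congrArg (·.fst) h)
    · have h1 : ((f a).firstDart <| Walk.not_nil_of_ne ha).snd = b :=
        congrArg (·.snd) h
      have h3 := congrArg Walk.length (hf' _ ((f a).tail.copy h1 rfl) ?_)
      · erw [Walk.length_copy _ _ _, ← add_left_inj 1,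
          Walk.length_tail_add_one (Walk.not_nil_of_ne ha)] at h3
        omega
      · simp only [ne_eq, eq_mp_eq_cast, id_eq, Walk.isPath_copy]
        exact (Walk.isPath_copy _ _ _).mpr (hf _).tail

end Aux

section Aux2
variable {X : Type*}

lemma subgraph_edge_ends {G : SimpleGraph X} {T : G.Subgraph} {z : Sym2 X}
    (hz : z ∈ T.edgeSet) : ∀ x ∈ z, x ∈ T.verts := by
  induction z using Sym2.ind with
  | _ x y =>
    rw [SimpleGraph.Subgraph.mem_edgeSet] at hz
    intro t ht
    rw [Sym2.mem_iff] at ht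
    rcases ht with rfl | rfl
    · exact hz.fst_mem
    · exact hz.snd_mem

lemma subgraph_coe_edge_ncard {G : SimpleGraph X} (T : G.Subgraph) :
    T.edgeSet.ncard = T.coe.edgeSet.ncard := by
  rw [← SimpleGraph.Subgraph.image_coe_edgeSet_coe T,
    Set.ncard_image_of_injective _ (Sym2.map.injective Subtype.val_injective)]

lemma subgraph_tree_ncard [Finite X] {G : SimpleGraph X} {T : G.Subgraph}
    (hT : T.coe.IsTree) : T.edgeSet.ncard + 1 = T.verts.ncard := by
  letI : Fintype X := Fintype.ofFinite X
  classical
  letI : Fintype ↥T.verts := Fintype.ofFinite _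
  letI : Fintype T.coe.edgeSet := Fintype.ofFinite _
  have h := hT.card_edgeFinset
  rw [subgraph_coe_edge_ncard, Set.ncard_eq_toFinset_card' T.coe.edgeSet]
  rw [show T.verts.ncard = Fintype.card ↥T.verts by
    rw [Set.ncard_eq_toFinset_card' T.verts, Set.toFinset_card]]
  exact h

lemma touch_ncard_of_external [Finite X] {G : SimpleGraph X} {S : Set X} {T : G.Subgraph}
    (h1 : S ⊆ T.verts) (h2 : T.coe.IsTree) {w : X} (hw : w ∈ T.verts) (hws : w ∉ S) :
    S.ncard ≤ (T.edgeSet ∩ {z | ∃ x ∈ S, x ∈ z}).ncard := by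
  classical
  obtain ⟨g, hg1, hg2⟩ := tree_firstEdge_inj h2 ⟨w, hw⟩
  set F : X → Sym2 X := fun x => if hx : x ∈ T.verts then Sym2.map (↑) (g ⟨x, hx⟩) else s(x, x)
    with hF
  have hFS : ∀ s (hs : s ∈ S), F s = Sym2.map (↑) (g ⟨s, h1 hs⟩) := by
    intro s hs; simp only [hF, dif_pos (h1 hs)]
  have hne : ∀ s (hs : s ∈ S), (⟨s, h1 hs⟩ : T.verts) ≠ ⟨w, hw⟩ := by
    intro s hs h
    have hsw : s = w := congrArg Subtype.val h
    exact hws (hsw ▸ hs)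
  have himg : F '' S ⊆ T.edgeSet ∩ {z | ∃ x ∈ S, x ∈ z} := by
    rintro - ⟨s, hs, rfl⟩
    rw [hFS s hs]
    obtain ⟨hmem, hin⟩ := hg1 ⟨s, h1 hs⟩ (hne s hs)
    constructor
    · rw [← SimpleGraph.Subgraph.image_coe_edgeSet_coe T]
      exact ⟨_, hmem, rfl⟩
    · exact ⟨s, hs, Sym2.mem_map.2 ⟨⟨s, h1 hs⟩, hin, rfl⟩⟩
  have hinj : Set.InjOn F S := by
    intro s hs t ht hst
    rw [hFS s hs, hFS t ht] at hst
    have := hg2 _ _ (hne s hs) (hne t ht)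
      (Sym2.map.injective Subtype.val_injective hst)
    exact congrArg Subtype.val this
  calc S.ncard = (F '' S).ncard := (Set.ncard_image_of_injOn hinj).symm
    _ ≤ _ := Set.ncard_le_ncard himg (Set.toFinite _)

end Aux2

section Aux3open
open Finset

section Aux3
variable {X : Type*} [Fintype X] [DecidableEq X]

def touchGraph (S : Finset X) : SimpleGraph X where
  Adj x y := x ≠ y ∧ (x ∈ S ∨ y ∈ S)
  symm := ⟨fun x y ⟨h1, h2⟩ => ⟨h1.symm, h2.symm⟩⟩
  loopless := ⟨fun x h => h.1 rfl⟩

instance (S : Finset X) : DecidableRel (touchGraph S).Adj :=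
  fun x y => inferInstanceAs (Decidable (x ≠ y ∧ (x ∈ S ∨ y ∈ S)))

def insideGraph (S : Finset X) : SimpleGraph X where
  Adj x y := x ≠ y ∧ x ∈ S ∧ y ∈ S
  symm := ⟨fun x y ⟨h1, h2, h3⟩ => ⟨h1.symm, h3, h2⟩⟩
  loopless := ⟨fun x h => h.1 rfl⟩

instance (S : Finset X) : DecidableRel (insideGraph S).Adj :=
  fun x y => inferInstanceAs (Decidable (x ≠ y ∧ x ∈ S ∧ y ∈ S))

lemma touchGraph_card (S : Finset X) :
    2 * (touchGraph S).edgeFinset.card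
      = S.card * (Fintype.card X - 1) + (Fintype.card X - S.card) * S.card := by
  have hdeg : ∀ x, (touchGraph S).degree x
      = if x ∈ S then Fintype.card X - 1 else S.card := by
    intro x
    by_cases hx : x ∈ S
    · rw [if_pos hx, ← card_neighborFinset_eq_degree]
      have : (touchGraph S).neighborFinset x = {x}ᶜ := by
        ext y
        simp only [mem_neighborFinset, Finset.mem_compl, Finset.mem_singleton]
        show (x ≠ y ∧ (x ∈ S ∨ y ∈ S)) ↔ ¬ y = x
        constructor
        · rintro ⟨h1, -⟩ h; exact h1 h.symm
        · intro h; exact ⟨fun h' => h h'.symm, Or.inl hx⟩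
      rw [this, card_compl, card_singleton]
    · rw [if_neg hx, ← card_neighborFinset_eq_degree]
      have : (touchGraph S).neighborFinset x = S := by
        ext y
        simp only [mem_neighborFinset]
        show (x ≠ y ∧ (x ∈ S ∨ y ∈ S)) ↔ y ∈ S
        constructor
        · rintro ⟨h1, h2 | h2⟩ <;> first | exact absurd h2 hx | exact h2
        · intro hy; exact ⟨fun h => hx (h ▸ hy), Or.inr hy⟩
      rw [this]
  rw [← sum_degrees_eq_twice_card_edges]
  rw [Finset.sum_congr rfl (fun x _ => hdeg x), Finset.sum_ite, Finset.sum_const,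
    Finset.sum_const, smul_eq_mul, smul_eq_mul]
  have h1 : Finset.univ.filter (· ∈ S) = S := by ext y; simp
  have h2 : Finset.univ.filter (· ∉ S) = Sᶜ := by ext y; simp
  rw [h1, h2, card_compl]

lemma insideGraph_card (S : Finset X) :
    2 * (insideGraph S).edgeFinset.card = S.card * (S.card - 1) := by
  have hdeg : ∀ x, (insideGraph S).degree x = if x ∈ S then S.card - 1 else 0 := by
    intro x
    by_cases hx : x ∈ S
    · rw [if_pos hx, ← card_neighborFinset_eq_degree]
      have : (insideGraph S).neighborFinset x = S.erase x := by
        ext y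
        simp only [mem_neighborFinset, mem_erase]
        show (x ≠ y ∧ x ∈ S ∧ y ∈ S) ↔ y ≠ x ∧ y ∈ S
        constructor
        · rintro ⟨h1, _, h3⟩; exact ⟨h1.symm, h3⟩
        · rintro ⟨h1, h2⟩; exact ⟨h1.symm, hx, h2⟩
      rw [this, card_erase_of_mem hx]
    · rw [if_neg hx, ← card_neighborFinset_eq_degree]
      have : (insideGraph S).neighborFinset x = ∅ := by
        ext y
        simp only [mem_neighborFinset, Finset.notMem_empty, iff_false]
        rintro ⟨h1, h2, h3⟩; exact hx h2
      rw [this, card_empty]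
  rw [← sum_degrees_eq_twice_card_edges]
  rw [Finset.sum_congr rfl (fun x _ => hdeg x), Finset.sum_ite, Finset.sum_const,
    Finset.sum_const, smul_eq_mul, smul_eq_mul]
  have h1 : Finset.univ.filter (· ∈ S) = S := by ext y; simp
  rw [h1, mul_zero, add_zero]

end Aux3
end Aux3open


lemma arith_key {a b q n T IC : ℤ} (ha0 : 0 ≤ a) (hb0 : 0 ≤ b) (hq : 2 ≤ q) (hn : 2*q ≤ n)
    (h1 : a*(2*q-1) + b*(2*q) ≤ T)
    (hT : 2*T ≤ 2*q*(n-1) + (n-2*q)*(2*q))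
    (h2 : a*(2*q-1) + 1 ≤ IC) (hIC : 2*IC = 2*q*(2*q-1)) :
    a + b + q + 1 ≤ n := by
  have ha : a ≤ q - 1 := by nlinarith
  have key : 4*q*(a+b+q) < 4*q*n := by nlinarith
  have := lt_of_mul_lt_mul_left key (by linarith : (0:ℤ) ≤ 4*q)
  linarith

lemma mem_touchGraph_edgeSet {X : Type*} [Fintype X] [DecidableEq X] {S : Finset X}
    {z : Sym2 X} (h1 : z ∈ (⊤ : SimpleGraph X).edgeSet) (h2 : ∃ x ∈ (S : Set X), x ∈ z) :
    z ∈ (touchGraph S).edgeSet := by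
  induction z using Sym2.ind with
  | _ x y =>
    rw [SimpleGraph.mem_edgeSet] at h1 ⊢
    obtain ⟨s, hs, hsz⟩ := h2
    rw [Sym2.mem_iff] at hsz
    refine ⟨h1.ne, ?_⟩
    rcases hsz with rfl | rfl
    · exact Or.inl hs
    · exact Or.inr hs

lemma mem_insideGraph_edgeSet {X : Type*} [Fintype X] [DecidableEq X] {S : Finset X}
    {z : Sym2 X} (h1 : z ∈ (⊤ : SimpleGraph X).edgeSet) (h2 : ∀ x ∈ z, x ∈ (S : Set X)) :
    z ∈ (insideGraph S).edgeSet := by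
  induction z using Sym2.ind with
  | _ x y =>
    rw [SimpleGraph.mem_edgeSet] at h1 ⊢
    exact ⟨h1.ne, h2 x (Sym2.mem_mk_left x y), h2 y (Sym2.mem_mk_right x y)⟩

theorem genEdgeConn_complete_minus_edge (n k : ℕ) (hk : Even k) (h4 : 4 ≤ k) (hkn : k ≤ n)
    (e : Sym2 (Fin n)) (he : e ∈ (⊤ : SimpleGraph (Fin n)).edgeSet) :
    genEdgeConn ((⊤ : SimpleGraph (Fin n)).deleteEdges {e}) k < n - k / 2 := by
  classical
  obtain ⟨q, hq2⟩ := hk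
  induction e using Sym2.ind with
  | _ u v =>
  have huv : u ≠ v := by simpa using he
  set G := (⊤ : SimpleGraph (Fin n)).deleteEdges {s(u, v)} with hGdef
  obtain ⟨Sfin, hsubS, -, hcard⟩ := Finset.exists_subsuperset_card_eq (n := k)
    (Finset.subset_univ ({u, v} : Finset (Fin n)))
    (by rw [Finset.card_pair huv]; omega)
    (by simpa using hkn)
  set S : Set (Fin n) := ↑Sfin with hSdef
  have hS : S.ncard = k := by rw [hSdef, Set.ncard_coe_finset, hcard]
  have huS : u ∈ Sfin := hsubS (Finset.mem_insert_self _ _)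
  have hvS : v ∈ Sfin := hsubS (by simp)
  have hbound : steinerEdgeConn G S ≤ n - k / 2 - 1 := by
    refine csSup_le ⟨0, Fin.elim0, fun i => i.elim0, fun i => i.elim0⟩ ?_
    rintro t ⟨f, htree, hdisj⟩
    set Touch : Set (Sym2 (Fin n)) := {z | ∃ x ∈ S, x ∈ z} with hTouch
    set A : Fin t → Finset (Sym2 (Fin n)) :=
      fun i => (Set.toFinite ((f i).edgeSet ∩ Touch)).toFinset with hA
    have hAmem : ∀ i z, z ∈ A i ↔ z ∈ (f i).edgeSet ∩ Touch := by
      intro i z; rw [hA]; exact Set.Finite.mem_toFinset _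
    have hAcard : ∀ i, (A i).card = ((f i).edgeSet ∩ Touch).ncard := by
      intro i; rw [hA]; exact (Set.ncard_eq_toFinset_card _ (Set.toFinite _)).symm
    have hedgeG : ∀ i, (f i).edgeSet ⊆
        (⊤ : SimpleGraph (Fin n)).edgeSet \ {s(u, v)} := by
      intro i
      rw [← SimpleGraph.edgeSet_deleteEdges]
      exact (f i).edgeSet_subset
    have hAsub : ∀ i, A i ⊆ (touchGraph Sfin).edgeFinset := by
      intro i z hz
      rw [hAmem] at hz
      rw [SimpleGraph.mem_edgeFinset]
      exact mem_touchGraph_edgeSet (hedgeG i hz.1).1 hz.2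
    have hAdisj : ∀ i ∈ Finset.univ, ∀ j ∈ Finset.univ,
        i ≠ j → Disjoint (A i) (A j) := by
      intro i _ j _ hij
      rw [Finset.disjoint_left]
      intro z hzi hzj
      rw [hAmem] at hzi hzj
      exact Set.disjoint_left.mp (hdisj i j hij) hzi.1 hzj.1
    have hsum1 : ∑ i, (A i).card ≤ (touchGraph Sfin).edgeFinset.card := by
      rw [← Finset.card_biUnion hAdisj]
      exact Finset.card_le_card (Finset.biUnion_subset.mpr fun i _ => hAsub i)
    set I : Finset (Fin t) := Finset.univ.filter (fun i => (f i).verts ⊆ S) with hI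
    have hint : ∀ i ∈ I, (A i).card + 1 = k := by
      intro i hi
      rw [hI, Finset.mem_filter] at hi
      have hverts : (f i).verts = S := le_antisymm hi.2 (htree i).1
      have hAi : (f i).edgeSet ∩ Touch = (f i).edgeSet := by
        rw [Set.inter_eq_left]
        intro z hz
        induction z using Sym2.ind with
        | _ x y =>
          exact ⟨x, by rw [← hverts]; exact subgraph_edge_ends hz x (Sym2.mem_mk_left x y),
            Sym2.mem_mk_left x y⟩
      calc (A i).card + 1 = ((f i).edgeSet ∩ Touch).ncard + 1 := by rw [hAcard]
        _ = (f i).edgeSet.ncard + 1 := by rw [hAi]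
        _ = k := by rw [subgraph_tree_ncard (htree i).2, hverts, hS]
    have hext : ∀ i ∈ Finset.univ \ I, k ≤ (A i).card := by
      intro i hi
      rw [Finset.mem_sdiff, hI, Finset.mem_filter] at hi
      have hns : ¬ (f i).verts ⊆ S := fun h => hi.2 ⟨Finset.mem_univ i, h⟩
      obtain ⟨w, hw, hws⟩ := Set.not_subset.mp hns
      have hkey := touch_ncard_of_external (htree i).1 (htree i).2 hw hws
      rw [hS] at hkey
      rw [hAcard]
      exact hkey
    have hlow1 : I.card * (k - 1) ≤ ∑ i ∈ I, (A i).card := by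
      simpa [smul_eq_mul] using Finset.card_nsmul_le_sum I (fun i => (A i).card) (k - 1) (fun i hi => by have := hint i hi; omega)
    have hlow2 : (Finset.univ \ I).card * k ≤ ∑ i ∈ Finset.univ \ I, (A i).card := by
      simpa using Finset.card_nsmul_le_sum _ _ _ hext
    have hfin1 : I.card * (k - 1) + (Finset.univ \ I).card * k
        ≤ (touchGraph Sfin).edgeFinset.card := by
      calc I.card * (k - 1) + (Finset.univ \ I).card * k
          ≤ (∑ i ∈ I, (A i).card) + ∑ i ∈ Finset.univ \ I, (A i).card :=
            add_le_add hlow1 hlow2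
        _ = ∑ i, (A i).card := by
            rw [add_comm]; exact Finset.sum_sdiff (Finset.subset_univ I)
        _ ≤ _ := hsum1
    have heIns : s(u, v) ∈ (insideGraph Sfin).edgeFinset := by
      rw [SimpleGraph.mem_edgeFinset]
      exact mem_insideGraph_edgeSet (by simpa using huv)
        (by intro x hx; rw [Sym2.mem_iff] at hx; rcases hx with rfl | rfl <;> simpa)
    have hins : ∀ i ∈ I, A i ⊆ (insideGraph Sfin).edgeFinset.erase s(u, v) := by
      intro i hi z hz
      rw [hAmem] at hz
      have hverts : (f i).verts = S := by
        rw [hI, Finset.mem_filter] at hi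
        exact le_antisymm hi.2 (htree i).1
      rw [Finset.mem_erase]
      refine ⟨by simpa using (hedgeG i hz.1).2, ?_⟩
      rw [SimpleGraph.mem_edgeFinset]
      refine mem_insideGraph_edgeSet (hedgeG i hz.1).1 ?_
      intro x hx
      rw [← hSdef, ← hverts]
      exact subgraph_edge_ends hz.1 x hx
    have hAdisjI : ∀ i ∈ I, ∀ j ∈ I, i ≠ j → Disjoint (A i) (A j) :=
      fun i _ j _ hij => hAdisj i (Finset.mem_univ i) j (Finset.mem_univ j) hij
    have hsum2 : ∑ i ∈ I, (A i).card
        ≤ (insideGraph Sfin).edgeFinset.card - 1 := by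
      rw [← Finset.card_biUnion hAdisjI, ← Finset.card_erase_of_mem heIns]
      exact Finset.card_le_card (Finset.biUnion_subset.mpr hins)
    have hICpos : 1 ≤ (insideGraph Sfin).edgeFinset.card :=
      Finset.card_pos.mpr ⟨_, heIns⟩
    have hfin2 : I.card * (k - 1) + 1 ≤ (insideGraph Sfin).edgeFinset.card := by
      have h' := le_trans hlow1 hsum2
      have h'' := Nat.add_le_add_right h' 1
      refine le_trans h'' ?_
      omega
    have hTc : 2 * (touchGraph Sfin).edgeFinset.card = k * (n - 1) + (n - k) * k := by
      rw [touchGraph_card, hcard, Fintype.card_fin]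
    have hICc : 2 * (insideGraph Sfin).edgeFinset.card = k * (k - 1) := by
      rw [insideGraph_card, hcard]
    have hab : I.card + (Finset.univ \ I).card = t := by
      rw [Finset.card_sdiff_of_subset (Finset.subset_univ I), Finset.card_univ, Fintype.card_fin]
      have : I.card ≤ t := by
        calc I.card ≤ Finset.univ.card := Finset.card_le_card (Finset.subset_univ I)
          _ = t := by rw [Finset.card_univ, Fintype.card_fin]
      omega
    -- cast to ℤ and use arith_key
    have hk2 : (k : ℤ) = 2 * (q : ℤ) := by omega
    have c1 : (I.card : ℤ) * (2 * q - 1) + ((Finset.univ \ I).card : ℤ) * (2 * q)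
        ≤ ((touchGraph Sfin).edgeFinset.card : ℤ) := by
      have := hfin1
      zify [show 1 ≤ k by omega] at this
      rw [hk2] at this
      exact this
    have c2 : 2 * ((touchGraph Sfin).edgeFinset.card : ℤ)
        ≤ 2 * q * ((n : ℤ) - 1) + ((n : ℤ) - 2 * q) * (2 * q) := by
      have := hTc
      zify [show 1 ≤ n by omega, hkn] at this
      rw [hk2] at this
      omega
    have c3 : (I.card : ℤ) * (2 * q - 1) + 1
        ≤ ((insideGraph Sfin).edgeFinset.card : ℤ) := by
      have := hfin2
      zify [show 1 ≤ k by omega] at this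
      rw [hk2] at this
      exact this
    have c4 : 2 * ((insideGraph Sfin).edgeFinset.card : ℤ) = 2 * q * (2 * q - 1) := by
      have := hICc
      zify [show 1 ≤ k by omega] at this
      rw [hk2] at this
      omega
    have final := arith_key (Int.natCast_nonneg I.card)
      (Int.natCast_nonneg (Finset.univ \ I).card)
      (by omega : (2 : ℤ) ≤ (q : ℤ)) (by push_cast; omega : 2 * (q : ℤ) ≤ (n : ℤ))
      c1 c2 c3 c4
    have ht : t + q + 1 ≤ n := by
      have : (t : ℤ) + q + 1 ≤ n := by rw [← hab]; push_cast; push_cast at final; linarith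
      exact_mod_cast this
    omega
  have h1 : genEdgeConn G k ≤ steinerEdgeConn G S :=
    Nat.sInf_le ⟨S, hS, rfl⟩
  have := le_trans h1 hbound
  omega
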